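/- Let k ≥ 3 be an integer. For every x ∈ C_k with x ∈ [0,1), one has g_k(Int.fract(k·x)) = Int.fract(2·g_k(x)); that is, g_k semiconjugates the k-transformation T_k restricted to C_k ∩ [0,1) with the doubling map T_2. -/

import Mathlib

open scoped ENNReal

/-- The `k`-transformation `x ↦ k·x mod 1`. -/
noncomputable def Tmap (k : ℕ) (x : ℝ) : ℝ := Int.fract ((k : ℝ) * x)

/-- The survivor set of the `k`-transformation with hole `(a,b)`. -/
def W (k : ℕ) (a b : ℝ) : Set ℝ :=
  {x | x ∈ Set.Ico (0 : ℝ) 1 ∧ ∀ n : ℕ, (Tmap k)^[n] x ∉ Set.Ioo a b}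

/-- The generalized Cantor set `C_k`. -/
def Ck (k : ℕ) : Set ℝ :=
  {x | ∃ a : ℕ → ℕ, (∀ n, a n = 0 ∨ a n = k - 1) ∧
    x = ∑' n : ℕ, (a n : ℝ) / (k : ℝ) ^ (n + 1)}

/-- The `n`-th `k`-ary digit of `x`. -/
noncomputable def digit (k : ℕ) (n : ℕ) (x : ℝ) : ℤ :=
  ⌊(k : ℝ) ^ (n + 1) * x⌋ % (k : ℤ)

open Classical in
/-- The generalized Cantor function `g_k`. -/
noncomputable def gk (k : ℕ) (x : ℝ) : ℝ :=
  if x = 1 then 1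
  else if ∀ n, digit k n x = 0 ∨ digit k n x = (k : ℤ) - 1 then
    ∑' n : ℕ, (digit k n x : ℝ) / (((k : ℝ) - 1) * 2 ^ (n + 1))
  else
    (∑ n ∈ Finset.range (sInf {n : ℕ | ¬(digit k n x = 0 ∨ digit k n x = (k : ℤ) - 1)}),
      (digit k n x : ℝ) / (((k : ℝ) - 1) * 2 ^ (n + 1))) +
    1 / 2 ^ (sInf {n : ℕ | ¬(digit k n x = 0 ∨ digit k n x = (k : ℤ) - 1)} + 1)

/-- The Thue–Morse sequence: parity of the number of 1s in the binary expansion. -/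
def tm (n : ℕ) : ℕ := (Nat.digits 2 n).sum % 2



lemma digit_nonneg {k : ℕ} (hk : 1 ≤ k) (n : ℕ) (x : ℝ) : 0 ≤ digit k n x :=
  Int.emod_nonneg _ (by positivity)

lemma digit_lt {k : ℕ} (hk : 1 ≤ k) (n : ℕ) (x : ℝ) : digit k n x < k :=
  Int.emod_lt_of_pos _ (by exact_mod_cast hk)

lemma digit_shift {k : ℕ} (hk : 1 ≤ k) (n : ℕ) (x : ℝ) :
    digit k n (Int.fract ((k : ℝ) * x)) = digit k (n + 1) x := by
  unfold digit
  have h1 : (k:ℝ)^(n+1) * Int.fract ((k:ℝ)*x)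
      = (k:ℝ)^(n+1+1) * x - ((k^(n+1) * ⌊(k:ℝ)*x⌋ : ℤ) : ℝ) := by
    rw [Int.fract]; push_cast; ring
  rw [h1, Int.floor_sub_intCast]
  have h2 : ⌊(k:ℝ)^(n+1+1)*x⌋ - (k:ℤ)^(n+1) * ⌊(k:ℝ)*x⌋
      = ⌊(k:ℝ)^(n+1+1)*x⌋ + (k:ℤ) * (-((k:ℤ)^n * ⌊(k:ℝ)*x⌋)) := by ring
  rw [h2, Int.add_mul_emod_self_left]

lemma digit_zero {k : ℕ} (hk : 1 ≤ k) (n : ℕ) : digit k n 0 = 0 := by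
  simp [digit]

lemma summable_half : Summable (fun n : ℕ => (1/2 : ℝ)^(n+1)) := by
  have h := (summable_geometric_of_lt_one (by norm_num : (0:ℝ) ≤ 1/2)
    (by norm_num)).mul_left (1/2 : ℝ)
  refine h.congr fun n => ?_
  rw [pow_succ]; ring

lemma tsum_half : ∑' n : ℕ, (1/2 : ℝ)^(n+1) = 1 := by
  have h : ∑' n : ℕ, (1/2:ℝ)^n = 2 := by
    rw [tsum_geometric_of_lt_one (by norm_num) (by norm_num)]; norm_num
  calc ∑' n : ℕ, (1/2 : ℝ)^(n+1) = ∑' n : ℕ, (1/2:ℝ) * (1/2)^n := by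
        congr 1; funext n; rw [pow_succ]; ring
    _ = (1/2) * 2 := by rw [tsum_mul_left, h]
    _ = 1 := by norm_num

lemma summable_aux {k : ℕ} (hk : 3 ≤ k) (f : ℕ → ℤ) (h0 : ∀ n, 0 ≤ f n)
    (h1 : ∀ n, f n < k) :
    Summable (fun n => (f n : ℝ) / (((k:ℝ)-1) * 2^(n+1))) := by
  have hk1 : (1:ℝ) < (k:ℝ) - 1 := by
    have : (3:ℝ) ≤ k := by exact_mod_cast hk
    linarith
  have hpos : ∀ n : ℕ, (0:ℝ) < ((k:ℝ)-1) * 2^(n+1) := fun n =>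
    mul_pos (by linarith) (by positivity)
  apply Summable.of_nonneg_of_le
    (fun n => div_nonneg (by exact_mod_cast h0 n) (hpos n).le) _ summable_half
  intro n
  rw [div_le_iff₀ (hpos n)]
  have : (f n : ℝ) ≤ (k:ℝ) - 1 := by
    have := h1 n; have : (f n : ℝ) < (k:ℝ) := by exact_mod_cast this
    linarith [(by exact_mod_cast Int.lt_iff_add_one_le.mp (h1 n) : (f n : ℝ) + 1 ≤ (k:ℝ))]
  calc (f n : ℝ) ≤ (k:ℝ) - 1 := this
    _ = (1/2)^(n+1) * (((k:ℝ)-1) * 2^(n+1)) := by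
        field_simp
        rw [← mul_pow]; norm_num
    _ ≤ _ := le_refl _

lemma exists_digit_ne {k : ℕ} (hk : 3 ≤ k) {y : ℝ} (hy : y ∈ Set.Ico (0:ℝ) 1) :
    ∃ n, digit k n y ≠ (k:ℤ) - 1 := by
  by_contra h
  push_neg at h
  have hk0 : (0:ℝ) < (k:ℝ) := by positivity
  have hfloor : ∀ n : ℕ, ⌊(k:ℝ)^(n+1) * y⌋ = (k:ℤ)^(n+1) - 1 := by
    intro n
    induction n with
    | zero =>
      have h0 : (0:ℝ) ≤ (k:ℝ)^(0+1) * y := by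
        have := hy.1; positivity
      have h1 : (k:ℝ)^(0+1) * y < (k:ℝ)^(0+1) := by
        have := hy.2
        have : (k:ℝ)^(0+1) * y < (k:ℝ)^(0+1) * 1 := by
          apply mul_lt_mul_of_pos_left hy.2 (by positivity)
        simpa using this
      have hlb : (0:ℤ) ≤ ⌊(k:ℝ)^(0+1) * y⌋ := Int.floor_nonneg.2 h0
      have hub : ⌊(k:ℝ)^(0+1) * y⌋ < (k:ℤ)^(0+1) := by
        rw [Int.floor_lt]; push_cast; exact h1
      have := h 0
      unfold digit at this
      rw [Int.emod_eq_of_lt hlb (by simpa using hub)] at this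
      simpa using this
    | succ n ih =>
      show ⌊(k:ℝ)^(n+2) * y⌋ = (k:ℤ)^(n+2) - 1
      have hr : ((k:ℤ)^(n+1) - 1 : ℝ) ≤ (k:ℝ)^(n+1) * y := by
        have := Int.floor_le ((k:ℝ)^(n+1) * y)
        rw [ih] at this
        exact_mod_cast this
      have hlb : ((k:ℤ)^(n+2) - k : ℝ) ≤ (k:ℝ)^(n+2) * y := by
        have h2 : (k:ℝ) * (((k:ℤ)^(n+1) - 1 : ℤ):ℝ) ≤ (k:ℝ) * ((k:ℝ)^(n+1) * y) :=
          mul_le_mul_of_nonneg_left (by exact_mod_cast hr) hk0.le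
        push_cast at h2 ⊢
        calc (k:ℝ)^(n+2) - k = (k:ℝ) * ((k:ℝ)^(n+1) - 1) := by ring
          _ ≤ (k:ℝ) * ((k:ℝ)^(n+1) * y) := by push_cast; linarith
          _ = (k:ℝ)^(n+2) * y := by ring
      have hub : (k:ℝ)^(n+2) * y < (k:ℝ)^(n+2) := by
        have : (k:ℝ)^(n+2) * y < (k:ℝ)^(n+2) * 1 :=
          mul_lt_mul_of_pos_left hy.2 (by positivity)
        simpa using this
      set a := ⌊(k:ℝ)^(n+2) * y⌋ with ha
      have halb : (k:ℤ)^(n+2) - k ≤ a := by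
        rw [ha]; apply Int.le_floor.2; push_cast; exact_mod_cast hlb
      have haub : a < (k:ℤ)^(n+2) := by
        rw [ha, Int.floor_lt]; push_cast; exact hub
      have hmod := h (n+1)
      unfold digit at hmod
      rw [show (n+1+1) = n+2 from rfl] at hmod
      -- a % k = k - 1, and a = (k^(n+2) - k) + (a - (k^(n+2) - k)) with remainder in [0, k)
      have hd : (a - ((k:ℤ)^(n+2) - k)) % (k:ℤ) = a % k := by
        have : a - ((k:ℤ)^(n+2) - k) = a + (k:ℤ) * (1 - (k:ℤ)^(n+1)) := by ring
        rw [this, Int.add_mul_emod_self_left]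
      have hr0 : 0 ≤ a - ((k:ℤ)^(n+2) - k) := by omega
      have hr1 : a - ((k:ℤ)^(n+2) - k) < (k:ℤ) := by omega
      have := Int.emod_eq_of_lt hr0 hr1
      rw [hd, hmod] at this
      omega
  -- now derive contradiction
  have hky : ∀ n : ℕ, 1 - y ≤ (1/(k:ℝ))^(n+1) := by
    intro n
    have := Int.floor_le ((k:ℝ)^(n+1) * y)
    rw [hfloor n] at this
    have h2 : ((k:ℝ)^(n+1) - 1) ≤ (k:ℝ)^(n+1) * y := by
      push_cast at this ⊢; linarith
    have hp : (0:ℝ) < (k:ℝ)^(n+1) := by positivity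
    rw [div_pow, one_pow, le_div_iff₀ hp]
    nlinarith
  obtain ⟨n, hn⟩ := exists_pow_lt_of_lt_one (by linarith [hy.2] : (0:ℝ) < 1 - y)
    (by rw [div_lt_one hk0]; exact_mod_cast (by omega : 1 < k) : (1/(k:ℝ)) < 1)
  have := hky n
  have hmono : (1/(k:ℝ))^(n+1) ≤ (1/(k:ℝ))^n := by
    apply pow_le_pow_of_le_one (by positivity) (by rw [div_le_one hk0]; exact_mod_cast by omega)
    omega
  linarith


lemma geomk_summable {k : ℕ} (hk : 3 ≤ k) :
    Summable (fun n : ℕ => ((k:ℝ)-1) / (k:ℝ)^(n+1)) := by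
  have hk0 : (0:ℝ) < (k:ℝ) := by positivity
  have h := (summable_geometric_of_lt_one (by positivity : (0:ℝ) ≤ 1/(k:ℝ))
    (by rw [div_lt_one hk0]; exact_mod_cast (by omega : 1 < k))).mul_left
    (((k:ℝ)-1) * (1/(k:ℝ)))
  refine h.congr fun n => ?_
  rw [pow_succ, div_eq_mul_inv, div_eq_mul_inv, mul_inv]
  simp only [one_mul, ← inv_pow]
  ring

lemma geomk_tsum {k : ℕ} (hk : 3 ≤ k) :
    ∑' n : ℕ, ((k:ℝ)-1) / (k:ℝ)^(n+1) = 1 := by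
  have hk0 : (0:ℝ) < (k:ℝ) := by positivity
  have hk1 : (1:ℝ) < (k:ℝ) := by exact_mod_cast (by omega : 1 < k)
  have h1 : ∑' n : ℕ, (1/(k:ℝ))^n = (1 - 1/(k:ℝ))⁻¹ :=
    tsum_geometric_of_lt_one (by positivity) (by rw [div_lt_one hk0]; exact hk1)
  calc ∑' n : ℕ, ((k:ℝ)-1) / (k:ℝ)^(n+1)
      = ∑' n : ℕ, (((k:ℝ)-1) * (1/(k:ℝ))) * (1/(k:ℝ))^n := by
        congr 1; funext n
        rw [pow_succ, div_eq_mul_inv, div_eq_mul_inv, mul_inv]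
        simp only [one_mul, ← inv_pow]
        ring
    _ = (((k:ℝ)-1) * (1/(k:ℝ))) * (1 - 1/(k:ℝ))⁻¹ := by rw [tsum_mul_left, h1]
    _ = 1 := by
        have h2 : ((k:ℝ)-1) ≠ 0 := by linarith
        have h3 : (k:ℝ) ≠ 0 := ne_of_gt hk0
        rw [show (1 - 1/(k:ℝ)) = ((k:ℝ)-1)/(k:ℝ) by field_simp]
        rw [inv_div]
        rw [show ((k:ℝ)-1) * (1/(k:ℝ)) * ((k:ℝ)/((k:ℝ)-1))
            = ((k:ℝ)-1)/((k:ℝ)-1) * ((k:ℝ)/(k:ℝ)) by ring]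
        rw [div_self h2, div_self h3, mul_one]

lemma ck_summable {k : ℕ} (hk : 3 ≤ k) (b : ℕ → ℕ) (hb : ∀ n, (b n : ℝ) ≤ (k:ℝ)-1) :
    Summable (fun n : ℕ => (b n : ℝ) / (k:ℝ)^(n+1)) := by
  apply Summable.of_nonneg_of_le (fun n => by positivity) _ (geomk_summable hk)
  intro n
  gcongr
  exact hb n

lemma ck_eq_inv {k : ℕ} (hk : 3 ≤ k) {x : ℝ} (hxC : x ∈ Ck k)
    (hx : x ∈ Set.Ico (0:ℝ) 1)
    (h : ¬(digit k 0 x = 0 ∨ digit k 0 x = (k:ℤ) - 1)) : x = 1/(k:ℝ) := by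
  obtain ⟨a, ha, hxa⟩ := hxC
  have hk0 : (0:ℝ) < (k:ℝ) := by positivity
  have hb : ∀ b : ℕ → ℕ, (∀ n, b n = 0 ∨ b n = k - 1) → ∀ n, (b n : ℝ) ≤ (k:ℝ)-1 := by
    intro b hbb n
    rcases hbb n with h' | h' <;> rw [h']
    · simp; exact_mod_cast (by omega : 1 ≤ k)
    · rw [Nat.cast_sub (by omega)]; simp
  have hba := hb a ha
  have hsum : Summable (fun n : ℕ => (a n : ℝ) / (k:ℝ)^(n+1)) := ck_summable hk a hba
  have hsum' : Summable (fun n : ℕ => (a (n+1) : ℝ) / (k:ℝ)^(n+1)) :=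
    ck_summable hk (fun n => a (n+1)) (fun n => hba (n+1))
  set y := ∑' n : ℕ, (a (n+1) : ℝ) / (k:ℝ)^(n+1) with hy
  have hxy : x = (a 0 : ℝ)/(k:ℝ) + y/(k:ℝ) := by
    rw [hxa, Summable.tsum_eq_zero_add hsum]
    have h2 : ∑' n : ℕ, (a (n+1) : ℝ) / (k:ℝ)^(n+1+1)
        = ∑' n : ℕ, (1/(k:ℝ)) * ((a (n+1) : ℝ) / (k:ℝ)^(n+1)) := by
      congr 1; funext n
      rw [pow_succ, div_eq_mul_inv, div_eq_mul_inv, div_eq_mul_inv, mul_inv]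
      ring
    rw [h2, tsum_mul_left]
    rw [pow_one]
    field_simp
    rfl
  have hy0 : 0 ≤ y := tsum_nonneg (fun n => by positivity)
  have hy1 : y ≤ 1 := by
    calc y ≤ ∑' n : ℕ, ((k:ℝ)-1) / (k:ℝ)^(n+1) := by
          apply Summable.tsum_le_tsum _ hsum' (geomk_summable hk)
          intro n
          gcongr
          exact hba (n+1)
      _ = 1 := geomk_tsum hk
  rcases lt_or_eq_of_le hy1 with hylt | hyeq
  · exfalso
    have hkx : (k:ℝ)*x = (a 0 : ℝ) + y := by rw [hxy]; field_simp
    have hfy : ⌊y⌋ = 0 := Int.floor_eq_zero_iff.2 ⟨hy0, hylt⟩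
    have hd0 : digit k 0 x = (a 0 : ℤ) % k := by
      unfold digit
      rw [pow_one, hkx]
      rw [show (a 0 : ℝ) + y = y + ((a 0 : ℤ) : ℝ) by push_cast; ring]
      rw [Int.floor_add_intCast, hfy, zero_add]
    rcases ha 0 with h' | h' <;> rw [h'] at hd0
    · exact h (Or.inl (by simpa using hd0))
    · apply h; right
      rw [hd0]
      have : ((k - 1 : ℕ) : ℤ) = (k:ℤ) - 1 := by omega
      rw [this, Int.emod_eq_of_lt (by omega) (by omega)]
  · have hkne : (k:ℝ) ≠ 0 := ne_of_gt hk0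
    rcases ha 0 with h' | h'
    · rw [hxy, h', hyeq]; norm_num
    · exfalso
      have hc : ((k - 1 : ℕ) : ℝ) = (k:ℝ) - 1 := by
        rw [Nat.cast_sub (by omega)]; simp
      have hx1 : x = 1 := by
        rw [hxy, h', hyeq, hc]; field_simp; ring
      rw [hx1] at hx
      exact absurd hx.2 (lt_irrefl 1)


lemma half_step (c A : ℝ) : c/(A*2) = (1/2)*(c/A) := by
  rw [← div_div, div_eq_mul_inv (c/A), ← one_div, mul_comm]

lemma term_le {k : ℕ} (hk : 3 ≤ k) {d : ℤ} (hd0 : 0 ≤ d) (hd : d < k) (n : ℕ) :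
    (d:ℝ)/(((k:ℝ)-1)*2^(n+1)) ≤ (1/2:ℝ)^(n+1) := by
  have hkR : (1:ℝ) < (k:ℝ) - 1 := by
    have : (3:ℝ) ≤ (k:ℝ) := by exact_mod_cast hk
    linarith
  have hpos : (0:ℝ) < ((k:ℝ)-1) * 2^(n+1) := mul_pos (by linarith) (by positivity)
  rw [div_le_iff₀ hpos]
  have hdk : (d:ℝ) ≤ (k:ℝ) - 1 := by
    have : (d:ℝ) + 1 ≤ (k:ℝ) := by exact_mod_cast Int.lt_iff_add_one_le.mp hd
    linarith
  calc (d:ℝ) ≤ (k:ℝ) - 1 := hdk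
    _ = (1/2)^(n+1) * (((k:ℝ)-1) * 2^(n+1)) := by
        rw [div_pow, one_pow]
        field_simp
    _ ≤ _ := le_refl _

lemma fin_geom : ∀ m : ℕ, ∑ n ∈ Finset.range m, (1/2:ℝ)^(n+1) = 1 - (1/2)^m := by
  intro m
  induction m with
  | zero => simp
  | succ m ih => rw [Finset.sum_range_succ, ih, pow_succ]; ring

lemma gk_zero {k : ℕ} (hk : 3 ≤ k) : gk k 0 = 0 := by
  unfold gk
  rw [if_neg (by norm_num : (0:ℝ) ≠ 1),
    if_pos (fun n => Or.inl (digit_zero (by omega) n))]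
  simp only [digit_zero (by omega : 1 ≤ k), Int.cast_zero, zero_div, tsum_zero]

lemma digit_inv_zero {k : ℕ} (hk : 3 ≤ k) : digit k 0 ((1:ℝ)/k) = 1 := by
  unfold digit
  have hkne : (k:ℝ) ≠ 0 := by positivity
  rw [pow_one, mul_one_div, div_self hkne]
  rw [Int.floor_one]
  exact Int.emod_eq_of_lt (by norm_num) (by exact_mod_cast (by omega : 1 < k))

lemma gk_inv {k : ℕ} (hk : 3 ≤ k) : gk k ((1:ℝ)/k) = 1/2 := by
  have h0 : ¬(digit k 0 ((1:ℝ)/k) = 0 ∨ digit k 0 ((1:ℝ)/k) = (k:ℤ) - 1) := by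
    rw [digit_inv_zero hk]
    push_neg
    constructor <;> omega
  have hne1 : (1:ℝ)/k ≠ 1 := by
    have : (1:ℝ)/k < 1 := by
      rw [div_lt_one (by positivity : (0:ℝ) < (k:ℝ))]
      exact_mod_cast (by omega : 1 < k)
    linarith
  unfold gk
  rw [if_neg hne1, if_neg (fun hcon => h0 (hcon 0))]
  rw [Nat.sInf_eq_zero.2 (Or.inl h0)]
  simp

lemma key {k : ℕ} (hk : 3 ≤ k) {x : ℝ} (hx : x ∈ Set.Ico (0:ℝ) 1)
    (h0 : digit k 0 x = 0 ∨ digit k 0 x = (k:ℤ) - 1) :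
    gk k (Int.fract ((k:ℝ) * x)) = Int.fract (2 * gk k x) := by
  have hk1 : 1 ≤ k := by omega
  have hkR : (1:ℝ) < (k:ℝ) - 1 := by
    have : (3:ℝ) ≤ (k:ℝ) := by exact_mod_cast hk
    linarith
  have hcast : (((k:ℤ) - 1 : ℤ) : ℝ) = (k:ℝ) - 1 := by push_cast; ring
  set y := Int.fract ((k:ℝ)*x) with hy
  have hy01 : y ∈ Set.Ico (0:ℝ) 1 := ⟨Int.fract_nonneg _, Int.fract_lt_one _⟩
  have hyne : y ≠ 1 := ne_of_lt hy01.2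
  have hxne : x ≠ 1 := ne_of_lt hx.2
  have hshift : ∀ n, digit k n y = digit k (n+1) x := fun n => digit_shift hk1 n x
  by_cases hall : ∀ n, digit k n x = 0 ∨ digit k n x = (k:ℤ) - 1
  · -- Case A
    have hall' : ∀ n, digit k n y = 0 ∨ digit k n y = (k:ℤ) - 1 := fun n => by
      rw [hshift n]; exact hall (n+1)
    have hgx : gk k x = ∑' n : ℕ, (digit k n x : ℝ)/(((k:ℝ)-1)*2^(n+1)) := by
      unfold gk; rw [if_neg hxne, if_pos hall]
    have hgy : gk k y = ∑' n : ℕ, (digit k (n+1) x : ℝ)/(((k:ℝ)-1)*2^(n+1)) := by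
      unfold gk; rw [if_neg hyne, if_pos hall']
      congr 1; funext n; rw [hshift n]
    have hS : Summable (fun n => (digit k n x : ℝ)/(((k:ℝ)-1)*2^(n+1))) :=
      summable_aux hk _ (fun n => digit_nonneg hk1 n x) (fun n => digit_lt hk1 n x)
    have hS' : Summable (fun n => (digit k (n+1) x : ℝ)/(((k:ℝ)-1)*2^(n+1))) :=
      summable_aux hk _ (fun n => digit_nonneg hk1 (n+1) x) (fun n => digit_lt hk1 (n+1) x)
    have hrel : 2 * gk k x = (digit k 0 x : ℝ)/((k:ℝ)-1) + gk k y := by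
      rw [hgx, hgy, Summable.tsum_eq_zero_add hS]
      have h2 : ∑' n : ℕ, (digit k (n+1) x : ℝ)/(((k:ℝ)-1)*2^(n+1+1))
          = ∑' n : ℕ, (1/2:ℝ) * ((digit k (n+1) x : ℝ)/(((k:ℝ)-1)*2^(n+1))) := by
        congr 1; funext n
        rw [pow_succ, ← mul_assoc, half_step]
      rw [h2, tsum_mul_left, pow_one]
      have hne : ((k:ℝ)-1) ≠ 0 := by linarith
      field_simp
    have hgy0 : 0 ≤ gk k y := by
      rw [hgy]
      exact tsum_nonneg (fun n => div_nonneg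
        (by exact_mod_cast digit_nonneg hk1 (n+1) x)
        (mul_nonneg (by linarith) (by positivity)))
    have hgy1 : gk k y < 1 := by
      rw [hgy]
      obtain ⟨m, hm⟩ := exists_digit_ne hk hy01
      rw [hshift m] at hm
      have hm0 : digit k (m+1) x = 0 := (hall (m+1)).resolve_right hm
      have hstrict : (digit k (m+1) x : ℝ)/(((k:ℝ)-1)*2^(m+1)) < (1/2:ℝ)^(m+1) := by
        rw [hm0]; simp only [Int.cast_zero, zero_div]; positivity
      calc ∑' n : ℕ, (digit k (n+1) x : ℝ)/(((k:ℝ)-1)*2^(n+1))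
          < ∑' n : ℕ, (1/2:ℝ)^(n+1) :=
            Summable.tsum_lt_tsum (fun n => term_le hk (digit_nonneg hk1 (n+1) x)
              (digit_lt hk1 (n+1) x) n) hstrict hS' summable_half
        _ = 1 := tsum_half
    rcases h0 with hd | hd
    · rw [hrel, hd]
      simp only [Int.cast_zero, zero_div, zero_add]
      exact (Int.fract_eq_self.2 ⟨hgy0, hgy1⟩).symm
    · rw [hrel, hd, hcast, div_self (by linarith : (k:ℝ)-1 ≠ 0), add_comm,
        Int.fract_add_one]
      exact (Int.fract_eq_self.2 ⟨hgy0, hgy1⟩).symm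
  · -- Case B
    have hne : {n : ℕ | ¬(digit k n x = 0 ∨ digit k n x = (k:ℤ) - 1)}.Nonempty := by
      obtain ⟨n, hn⟩ := not_forall.1 hall
      exact ⟨n, hn⟩
    set N := sInf {n : ℕ | ¬(digit k n x = 0 ∨ digit k n x = (k:ℤ) - 1)} with hN
    have hNmem : ¬(digit k N x = 0 ∨ digit k N x = (k:ℤ) - 1) := Nat.sInf_mem hne
    have hNpos : N ≠ 0 := fun h => hNmem (h ▸ h0)
    obtain ⟨m, hm⟩ : ∃ m, N = m + 1 := ⟨N-1, by omega⟩
    have hnally : ¬ ∀ n, digit k n y = 0 ∨ digit k n y = (k:ℤ) - 1 := by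
      intro hcon
      have := hcon m
      rw [hshift m, ← hm] at this
      exact hNmem this
    have hSy_inf : sInf {n : ℕ | ¬(digit k n y = 0 ∨ digit k n y = (k:ℤ) - 1)} = m := by
      apply le_antisymm
      · apply Nat.sInf_le
        show ¬(digit k m y = 0 ∨ digit k m y = (k:ℤ) - 1)
        rw [hshift m, ← hm]
        exact hNmem
      · apply le_csInf
        · obtain ⟨j, hj⟩ := not_forall.1 hnally
          exact ⟨j, hj⟩
        · intro j hj
          by_contra hjm
          push_neg at hjm
          have hjmem : ¬(digit k j y = 0 ∨ digit k j y = (k:ℤ) - 1) := hj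
          rw [hshift j] at hjmem
          have : N ≤ j + 1 := Nat.sInf_le hjmem
          omega
    have hgx : gk k x = (∑ n ∈ Finset.range N,
        (digit k n x : ℝ)/(((k:ℝ)-1)*2^(n+1))) + 1/2^(N+1) := by
      unfold gk; rw [if_neg hxne, if_neg hall]
    have hgy : gk k y = (∑ n ∈ Finset.range m,
        (digit k (n+1) x : ℝ)/(((k:ℝ)-1)*2^(n+1))) + 1/2^(m+1) := by
      unfold gk; rw [if_neg hyne, if_neg hnally, hSy_inf]
      congr 1
      apply Finset.sum_congr rfl
      intro n _
      rw [hshift n]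
    have hsplit : (∑ n ∈ Finset.range (m+1), (digit k n x : ℝ)/(((k:ℝ)-1)*2^(n+1)))
        = (1/2) * (∑ n ∈ Finset.range m, (digit k (n+1) x : ℝ)/(((k:ℝ)-1)*2^(n+1)))
          + (digit k 0 x : ℝ)/(((k:ℝ)-1)*2) := by
      rw [Finset.sum_range_succ']
      congr 1
      · rw [Finset.mul_sum]
        apply Finset.sum_congr rfl
        intro i _
        rw [pow_succ, ← mul_assoc, half_step]
      · rw [pow_one]
    have hrel : 2 * gk k x = (digit k 0 x : ℝ)/((k:ℝ)-1) + gk k y := by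
      rw [hgx, hgy, hm, hsplit, pow_succ (2:ℝ) (m+1)]
      have hne2 : ((k:ℝ)-1) ≠ 0 := by linarith
      field_simp
      ring
    have hgy0 : 0 ≤ gk k y := by
      rw [hgy]
      have : (0:ℝ) ≤ ∑ n ∈ Finset.range m, (digit k (n+1) x : ℝ)/(((k:ℝ)-1)*2^(n+1)) :=
        Finset.sum_nonneg (fun n _ => div_nonneg
          (by exact_mod_cast digit_nonneg hk1 (n+1) x)
          (mul_nonneg (by linarith) (by positivity)))
      positivity
    have hgy1 : gk k y < 1 := by
      rw [hgy]
      have hA : (∑ n ∈ Finset.range m, (digit k (n+1) x : ℝ)/(((k:ℝ)-1)*2^(n+1)))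
          ≤ 1 - (1/2:ℝ)^m := by
        rw [← fin_geom]
        apply Finset.sum_le_sum
        intro n _
        exact term_le hk (digit_nonneg hk1 (n+1) x) (digit_lt hk1 (n+1) x) n
      have h2 : (1:ℝ)/2^(m+1) = (1/2:ℝ)^(m+1) := by rw [div_pow, one_pow]
      have h3 : (1/2:ℝ)^(m+1) < (1/2:ℝ)^m := by
        rw [pow_succ]
        have := pow_pos (by norm_num : (0:ℝ) < 1/2) m
        linarith
      rw [h2]
      linarith
    rcases h0 with hd | hd
    · rw [hrel, hd]
      simp only [Int.cast_zero, zero_div, zero_add]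
      exact (Int.fract_eq_self.2 ⟨hgy0, hgy1⟩).symm
    · rw [hrel, hd, hcast, div_self (by linarith : (k:ℝ)-1 ≠ 0), add_comm,
        Int.fract_add_one]
      exact (Int.fract_eq_self.2 ⟨hgy0, hgy1⟩).symm

/-- `g_k` semiconjugates `T_k` on `C_k ∩ [0,1)` with the doubling map. -/
theorem stmt13 (k : ℕ) (hk : 3 ≤ k) (x : ℝ) (hxC : x ∈ Ck k)
    (hx : x ∈ Set.Ico (0 : ℝ) 1) :
    gk k (Int.fract ((k : ℝ) * x)) = Int.fract (2 * gk k x) := by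
  by_cases h0 : digit k 0 x = 0 ∨ digit k 0 x = (k : ℤ) - 1
  · exact key hk hx h0
  · have hx1k := ck_eq_inv hk hxC hx h0
    have hkne : (k:ℝ) ≠ 0 := by positivity
    rw [hx1k, gk_inv hk]
    have h1 : (k:ℝ) * ((1:ℝ)/k) = 1 := by field_simp
    rw [h1, Int.fract_one, gk_zero hk]
    norm_num [Int.fract_one]
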